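/- Let A be a commutative noetherian ring, M a finitely generated A-module, F a finitely generated free A-module, and φ: M → F an A-linear map. Then φ is versal if and only if for every finitely generated A-module P, the map G_φ(P): G_M(P) → G_F(P) is injective. -/

import Mathlib

open Module LinearMap

/-- A linear map `φ : M → F` is *versal* if every linear map from `M` into a finitely
generated free module factors through `φ`. -/
def IsVersal (A : Type) [CommRing A] {M F : Type} [AddCommGroup M] [Module A M]
    [AddCommGroup F] [Module A F] (φ : M →ₗ[A] F) : Prop :=
  ∀ (E : Type) [AddCommGroup E] [Module A E] [Module.Free A E] [Module.Finite A E]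
    (g : M →ₗ[A] E), ∃ h : F →ₗ[A] E, g = h ∘ₗ φ

open Module LinearMap TensorProduct

/-- The natural map `α_{M,P} : M ⊗ P → Hom(M*, P)`, `α(m ⊗ p)(λ) = λ(m) • p`. -/
noncomputable def alphaMap (A : Type) [CommRing A] (M P : Type) [AddCommGroup M]
    [Module A M] [AddCommGroup P] [Module A P] :
    M ⊗[A] P →ₗ[A] (Module.Dual A M →ₗ[A] P) :=
  (dualTensorHom A (Module.Dual A M) P) ∘ₗ
    (TensorProduct.map (Module.Dual.eval A M) LinearMap.id)

/-- `G_M(P)` is the image of `α_{M,P} : M ⊗ P → Hom(M*, P)`. -/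
noncomputable def GFun (A : Type) [CommRing A] (M P : Type) [AddCommGroup M] [Module A M]
    [AddCommGroup P] [Module A P] : Submodule A (Module.Dual A M →ₗ[A] P) :=
  LinearMap.range (alphaMap A M P)

open CategoryTheory in
/-- Every module embeds into an injective module. -/
lemma exists_embed_injective (A : Type) [CommRing A] (Q : Type) [AddCommGroup Q] [Module A Q] :
    ∃ (I : Type) (_ : AddCommGroup I) (_ : Module A I) (_ : Module.Injective A I)
      (f : Q →ₗ[A] I), Function.Injective f := by
  let Qc : ModuleCat A := ModuleCat.of A Q
  let J : ModuleCat A := Injective.under Qc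
  refine ⟨J.carrier, J.isAddCommGroup, J.isModule, ?_, (Injective.ι Qc).hom, ?_⟩
  · exact Module.injective_module_of_injective_object A _
      (inj := inferInstanceAs (Injective J))
  · exact (ModuleCat.mono_iff_injective _).mp inferInstance

/-- Over a noetherian ring, the dual of a finite module is finite. -/
lemma dual_finite_of_finite (A M : Type) [CommRing A] [IsNoetherianRing A] [AddCommGroup M]
    [Module A M] [Module.Finite A M] : Module.Finite A (Module.Dual A M) := by
  obtain ⟨n, p, hp⟩ := Module.Finite.exists_fin' A M
  exact Module.Finite.of_injective p.dualMap (p.dualMap_injective_of_surjective hp)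

lemma alphaMap_tmul (A : Type) [CommRing A] {M P : Type} [AddCommGroup M]
    [Module A M] [AddCommGroup P] [Module A P] (m : M) (p : P) (lam : Module.Dual A M) :
    alphaMap A M P (m ⊗ₜ p) lam = lam m • p := by
  simp [alphaMap]

/-- A versal map has surjective dual. -/
lemma IsVersal.dualMap_surjective {A : Type} [CommRing A] {M F : Type} [AddCommGroup M]
    [Module A M] [AddCommGroup F] [Module A F] {φ : M →ₗ[A] F} (hv : IsVersal A φ) :
    Function.Surjective φ.dualMap := by
  intro lam
  obtain ⟨h, hh⟩ := hv A lam
  exact ⟨h, hh.symm⟩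

/-- A map with surjective dual is versal. -/
lemma isVersal_of_dualMap_surjective {A : Type} [CommRing A] {M F : Type} [AddCommGroup M]
    [Module A M] [AddCommGroup F] [Module A F] {φ : M →ₗ[A] F}
    (hs : Function.Surjective φ.dualMap) : IsVersal A φ := by
  intro E _ _ _ _ g
  choose h hh using hs
  let B := Module.Free.chooseBasis A E
  refine ⟨∑ i, (h (B.coord i ∘ₗ g)).smulRight (B i), ?_⟩
  ext m
  have : ∀ ξ : Module.Dual A M, ∀ x : M, h ξ (φ x) = ξ x := by
    intro ξ x
    have := hh ξ
    calc h ξ (φ x) = φ.dualMap (h ξ) x := rfl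
    _ = ξ x := by rw [this]
  simp only [coe_comp, Function.comp_apply, LinearMap.sum_apply, smulRight_apply, this]
  exact (B.sum_repr (g m)).symm

/-- `φ : M → F` is versal iff the maps `G_φ(P) : G_M(P) → G_F(P)` are injective for all
finitely generated `P`. -/
theorem stmt16 (A : Type) [CommRing A] [IsNoetherianRing A]
    (M F : Type) [AddCommGroup M] [Module A M] [Module.Finite A M]
    [AddCommGroup F] [Module A F] [Module.Free A F] [Module.Finite A F]
    (φ : M →ₗ[A] F) :
    IsVersal A φ ↔
      ∀ (P : Type) [AddCommGroup P] [Module A P] [Module.Finite A P],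
        Set.InjOn (LinearMap.lcomp A P φ.dualMap) (GFun A M P) := by
  constructor
  · intro hv P _ _ _
    have hs := hv.dualMap_surjective
    intro g _ g' _ heq
    ext μ
    obtain ⟨ν, rfl⟩ := hs μ
    exact LinearMap.congr_fun heq ν
  · intro H
    apply isVersal_of_dualMap_surjective
    -- Consider the cokernel of `φ.dualMap` and embed it into an injective module.
    set R := LinearMap.range φ.dualMap with hR
    haveI : Module.Finite A (Module.Dual A M) := dual_finite_of_finite A M
    obtain ⟨I, _, _, hinj, ι, hι⟩ :=
      exists_embed_injective A (Module.Dual A M ⧸ R)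
    obtain ⟨n, p, hp⟩ := Module.Finite.exists_fin' A M
    have hpd : Function.Injective p.dualMap := p.dualMap_injective_of_surjective hp
    haveI := hinj
    obtain ⟨k, hk⟩ := Module.Injective.extension_property A I (Module.Dual A M)
      (Module.Dual A (Fin n → A)) p.dualMap hpd (ι ∘ₗ R.mkQ)
    -- the span of the images of the coordinate functionals is a finite module
    set c : Fin n → I := fun i => k (LinearMap.proj i) with hc
    set P' : Submodule A I := Submodule.span A (Set.range c) with hP'
    haveI : Module.Finite A P' := Module.Finite.span_of_finite A (Set.finite_range c)
    have hmem : ∀ i, c i ∈ P' := fun i => Submodule.subset_span ⟨i, rfl⟩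
    -- every functional on `Fin n → A` is a combination of coordinate functionals
    have key : ∀ μ : Module.Dual A M, k (p.dualMap μ) = ∑ i, μ (p (Pi.single i 1)) • c i := by
      intro μ
      have hμ : p.dualMap μ = ∑ i, μ (p (Pi.single i 1)) • (LinearMap.proj i :
          (Fin n → A) →ₗ[A] A) := by
        ext v
        simp [Pi.single_apply]
      rw [hμ, map_sum]
      simp [hc]
    -- the element of `G_M(P')`
    set x : M ⊗[A] P' := ∑ i, (p (Pi.single i 1)) ⊗ₜ (⟨c i, hmem i⟩ : P') with hx
    set j : Module.Dual A M →ₗ[A] P' := alphaMap A M P' x with hj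
    have hjval : ∀ μ : Module.Dual A M, (j μ : I) = k (p.dualMap μ) := by
      intro μ
      rw [key]
      have hjm : j μ = ∑ i, μ (p (Pi.single i 1)) • (⟨c i, hmem i⟩ : P') := by
        simp only [hj, hx, map_sum, LinearMap.sum_apply, alphaMap_tmul]
      rw [hjm, Submodule.coe_sum]
      rfl
    have hjmem : j ∈ GFun A M P' := ⟨x, rfl⟩
    have hzero : (0 : Module.Dual A M →ₗ[A] P') ∈ GFun A M P' :=
      Submodule.zero_mem _
    have hcomp : LinearMap.lcomp A P' φ.dualMap j = LinearMap.lcomp A P' φ.dualMap 0 := by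
      rw [map_zero]
      ext ν
      show ((j (φ.dualMap ν) : P') : I) = (((0 : Module.Dual A F →ₗ[A] P') ν : P') : I)
      rw [hjval]
      have : k (p.dualMap (φ.dualMap ν)) = (ι ∘ₗ R.mkQ) (φ.dualMap ν) := by
        rw [← hk]; rfl
      rw [this]
      have : R.mkQ (φ.dualMap ν) = 0 := by
        rw [Submodule.mkQ_apply, Submodule.Quotient.mk_eq_zero]
        exact ⟨ν, rfl⟩
      simp [this]
    have hj0 : j = 0 := H P' hjmem hzero hcomp
    -- conclude surjectivity
    intro μ
    have h1 : (j μ : I) = 0 := by rw [hj0]; simp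
    rw [hjval] at h1
    have h2 : k (p.dualMap μ) = (ι ∘ₗ R.mkQ) μ := by rw [← hk]; rfl
    rw [h2] at h1
    have h3 : R.mkQ μ = 0 := hι (by simpa using h1)
    rw [Submodule.mkQ_apply, Submodule.Quotient.mk_eq_zero] at h3
    exact h3
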